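/- arXiv:2002.04782 — 2 statements merged into one kernel-verified Lean document; each statement's English description precedes it below -/
import Mathlib

section
/- Let A be a modal algebra in which 0 is the greatest lower bound of {◇ⁿ⊤ : n ∈ ω}. Then for every k ∈ ω, the element □ᵏ0 is the greatest lower bound of the set {□ᵏ◇ⁿ⊤ : n ∈ ω}, where □ᵏ denotes k-fold application of □. -/
/-- The diamond operation `◇x = ¬□¬x` of a modal algebra. -/
def diaA {A : Type} [BooleanAlgebra A] (box : A → A) (x : A) : A := (box xᶜ)ᶜ

/-- `dianA box n = ◇ⁿ⊤`. -/
def dianA {A : Type} [BooleanAlgebra A] (box : A → A) : ℕ → A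
  | 0 => ⊤
  | n+1 => diaA box (dianA box n)

section Aux

variable {A : Type} [BooleanAlgebra A] (box : A → A)

lemma box_mono (hbox_inf : ∀ x y : A, box (x ⊓ y) = box x ⊓ box y)
    {x y : A} (h : x ≤ y) : box x ≤ box y := by
  have h2 : box (x ⊓ y) = box x ⊓ box y := hbox_inf x y
  rw [inf_eq_left.mpr h] at h2
  rw [h2]; exact inf_le_right

lemma boxk_mono (hbox_inf : ∀ x y : A, box (x ⊓ y) = box x ⊓ box y)
    (k : ℕ) {x y : A} (h : x ≤ y) : box^[k] x ≤ box^[k] y := by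
  induction k generalizing x y with
  | zero => simpa using h
  | succ k ih =>
    rw [Function.iterate_succ_apply', Function.iterate_succ_apply']
    exact box_mono box hbox_inf (ih h)

lemma dia_mono (hbox_inf : ∀ x y : A, box (x ⊓ y) = box x ⊓ box y)
    {x y : A} (h : x ≤ y) : diaA box x ≤ diaA box y := by
  unfold diaA
  exact compl_le_compl (box_mono box hbox_inf (compl_le_compl h))

lemma diak_mono (hbox_inf : ∀ x y : A, box (x ⊓ y) = box x ⊓ box y)
    (k : ℕ) {x y : A} (h : x ≤ y) : (diaA box)^[k] x ≤ (diaA box)^[k] y := by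
  induction k generalizing x y with
  | zero => simpa using h
  | succ k ih =>
    rw [Function.iterate_succ_apply', Function.iterate_succ_apply']
    exact dia_mono box hbox_inf (ih h)

/-- `□a ⊓ ◇b ≤ ◇(a ⊓ b)`. -/
lemma box_inf_dia (hbox_inf : ∀ x y : A, box (x ⊓ y) = box x ⊓ box y)
    (a b : A) : box a ⊓ diaA box b ≤ diaA box (a ⊓ b) := by
  unfold diaA
  rw [le_compl_iff_disjoint_right, disjoint_iff, ← le_bot_iff]
  have h1 : box a ⊓ box (a ⊓ b)ᶜ ≤ box bᶜ := by
    rw [← hbox_inf]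
    apply box_mono box hbox_inf
    rw [compl_inf]
    calc a ⊓ (aᶜ ⊔ bᶜ) = (a ⊓ aᶜ) ⊔ (a ⊓ bᶜ) := inf_sup_left a aᶜ bᶜ
    _ ≤ bᶜ := by simp [inf_le_right]
  calc box a ⊓ (box bᶜ)ᶜ ⊓ box (a ⊓ b)ᶜ
      = (box a ⊓ box (a ⊓ b)ᶜ) ⊓ (box bᶜ)ᶜ := by ac_rfl
    _ ≤ box bᶜ ⊓ (box bᶜ)ᶜ := inf_le_inf_right _ h1
    _ ≤ ⊥ := by simp

/-- `□ᵏa ⊓ ◇ᵏb ≤ ◇ᵏ(a ⊓ b)`. -/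
lemma boxk_inf_diak (hbox_inf : ∀ x y : A, box (x ⊓ y) = box x ⊓ box y)
    (k : ℕ) (a b : A) :
    box^[k] a ⊓ (diaA box)^[k] b ≤ (diaA box)^[k] (a ⊓ b) := by
  induction k generalizing a b with
  | zero => simp
  | succ k ih =>
    rw [Function.iterate_succ_apply', Function.iterate_succ_apply',
      Function.iterate_succ_apply']
    calc box (box^[k] a) ⊓ diaA box ((diaA box)^[k] b)
        ≤ diaA box (box^[k] a ⊓ (diaA box)^[k] b) :=
          box_inf_dia box hbox_inf _ _
      _ ≤ diaA box ((diaA box)^[k] (a ⊓ b)) := dia_mono box hbox_inf (ih a b)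

lemma dianA_eq_iterate (n : ℕ) : dianA box n = (diaA box)^[n] ⊤ := by
  induction n with
  | zero => rfl
  | succ n ih => rw [dianA, ih, Function.iterate_succ_apply']

lemma dianA_eq_compl_boxk_bot (k : ℕ) : dianA box k = (box^[k] (⊥ : A))ᶜ := by
  induction k with
  | zero => simp [dianA]
  | succ k ih =>
    rw [dianA, diaA, ih, compl_compl, Function.iterate_succ_apply']

lemma dianA_succ_le (hbox_inf : ∀ x y : A, box (x ⊓ y) = box x ⊓ box y)
    (n : ℕ) : dianA box (n + 1) ≤ dianA box n := by
  rw [dianA_eq_iterate, dianA_eq_iterate, Function.iterate_succ_apply]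
  exact diak_mono box hbox_inf n le_top

lemma dianA_antitone (hbox_inf : ∀ x y : A, box (x ⊓ y) = box x ⊓ box y)
    {m n : ℕ} (h : m ≤ n) : dianA box n ≤ dianA box m := by
  induction n with
  | zero => simp_all
  | succ n ih =>
    rcases Nat.lt_or_ge m (n+1) with h' | h'
    · exact le_trans (dianA_succ_le box hbox_inf n) (ih (Nat.lt_succ_iff.mp h'))
    · have : m = n + 1 := le_antisymm h h'
      simp [this]

end Aux

theorem stmt3 {A : Type} [BooleanAlgebra A] (box : A → A)
    (hbox_top : box ⊤ = ⊤) (hbox_inf : ∀ x y : A, box (x ⊓ y) = box x ⊓ box y)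
    (hglb : IsGLB (Set.range fun n : ℕ => dianA box n) (⊥ : A))
    (k : ℕ) :
    IsGLB (Set.range fun n : ℕ => box^[k] (dianA box n)) (box^[k] (⊥ : A)) := by
  constructor
  · rintro x ⟨n, rfl⟩
    exact boxk_mono box hbox_inf k bot_le
  · rintro b hb
    have hb' : ∀ n, b ≤ box^[k] (dianA box n) := fun n => hb ⟨n, rfl⟩
    -- show b ⊓ dianA k is a lower bound of all dianA m
    have key : ∀ m, b ⊓ dianA box k ≤ dianA box m := by
      intro m
      have h1 : b ⊓ dianA box k ≤ box^[k] (dianA box m) ⊓ (diaA box)^[k] ⊤ := by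
        rw [dianA_eq_iterate]
        exact inf_le_inf (hb' m) le_rfl
      have h2 : box^[k] (dianA box m) ⊓ (diaA box)^[k] ⊤
          ≤ (diaA box)^[k] (dianA box m ⊓ ⊤) := boxk_inf_diak box hbox_inf k _ _
      have h3 : (diaA box)^[k] (dianA box m ⊓ ⊤) = dianA box (m + k) := by
        rw [inf_top_eq, dianA_eq_iterate, dianA_eq_iterate, ← Function.iterate_add_apply]
        congr 1
        omega
      have h4 : dianA box (m + k) ≤ dianA box m :=
        dianA_antitone box hbox_inf (Nat.le_add_right m k)
      exact le_trans h1 (le_trans h2 (h3 ▸ h4))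
    have : b ⊓ dianA box k ≤ ⊥ := hglb.2 (by rintro x ⟨m, rfl⟩; exact key m)
    have hdisj : b ≤ (dianA box k)ᶜ := by
      rw [le_compl_iff_disjoint_right, disjoint_iff]
      exact le_bot_iff.mp this
    rwa [dianA_eq_compl_boxk_bot, compl_compl] at hdisj
end

section
/- For every modal formula φ: φ ∈ GL if and only if every transitive Kripke frame of locally finite height validates φ. -/
/-- Modal formulas over a countable set of propositional variables. -/
inductive Fml : Type where
  | prop : ℕ → Fml
  | top : Fml
  | and : Fml → Fml → Fml
  | neg : Fml → Fml
  | box : Fml → Fml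

namespace Fml
/-- `⊥` abbreviates `¬⊤`. -/
def bot : Fml := neg top
/-- `φ ∨ ψ` abbreviates `¬(¬φ ∧ ¬ψ)`. -/
def or (φ ψ : Fml) : Fml := neg (and (neg φ) (neg ψ))
/-- `φ ⊃ ψ` abbreviates `¬(φ ∧ ¬ψ)`. -/
def imp (φ ψ : Fml) : Fml := neg (and φ (neg ψ))
/-- `◇φ` abbreviates `¬□¬φ`. -/
def dia (φ : Fml) : Fml := neg (box (neg φ))
/-- `◇ⁿφ`: n-fold application of `◇`. -/
def dian : ℕ → Fml → Fml
  | 0, φ => φ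
  | n+1, φ => dia (dian n φ)
end Fml

/-- Truth of a modal formula at a world of a Kripke model `(W, R, v)`. -/
def Truth {W : Type} (R : W → W → Prop) (v : ℕ → Set W) : Fml → W → Prop
  | .prop n, w => w ∈ v n
  | .top, _ => True
  | .and φ ψ, w => Truth R v φ w ∧ Truth R v ψ w
  | .neg φ, w => ¬ Truth R v φ w
  | .box φ, w => ∀ w', R w w' → Truth R v φ w'

/-- A frame validates `φ` if `φ` is true at every world under every valuation. -/
def Valid {W : Type} (R : W → W → Prop) (φ : Fml) : Prop :=
  ∀ (v : ℕ → Set W) (w : W), Truth R v φ w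

/-- A frame is of locally finite height if for every world `w`, the supremum of
lengths of `R`-chains starting at `w` is finite. -/
def LocallyFiniteHeight {W : Type} (R : W → W → Prop) : Prop :=
  ∀ w : W, ∃ N : ℕ, ∀ (n : ℕ) (c : ℕ → W),
    c 0 = w → (∀ i < n, R (c i) (c (i+1))) → n ≤ N

/-- Boolean evaluation treating propositional variables and boxed formulas as atoms. -/
def beval (f : Fml → Bool) : Fml → Bool
  | .prop n => f (.prop n)
  | .top => true
  | .and φ ψ => beval f φ && beval f ψ
  | .neg φ => !(beval f φ)
  | .box φ => f (.box φ)

/-- Classical propositional tautologies (in the modal language). -/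
def Taut (φ : Fml) : Prop := ∀ f : Fml → Bool, beval f φ = true

/-- Uniform substitution. -/
def fsubst (σ : ℕ → Fml) : Fml → Fml
  | .prop n => σ n
  | .top => .top
  | .and φ ψ => .and (fsubst σ φ) (fsubst σ ψ)
  | .neg φ => .neg (fsubst σ φ)
  | .box φ => .box (fsubst σ φ)

/-- The axiom K : `□(p ⊃ q) ⊃ (□p ⊃ □q)`. -/
def axK : Fml :=
  Fml.imp (Fml.box (Fml.imp (Fml.prop 0) (Fml.prop 1)))
    (Fml.imp (Fml.box (Fml.prop 0)) (Fml.box (Fml.prop 1)))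

/-- The axiom 4 : `□p ⊃ □□p`. -/
def axFour : Fml :=
  Fml.imp (Fml.box (Fml.prop 0)) (Fml.box (Fml.box (Fml.prop 0)))

/-- The Löb formula : `□(□p ⊃ p) ⊃ □p`. -/
def axLob : Fml :=
  Fml.imp (Fml.box (Fml.imp (Fml.box (Fml.prop 0)) (Fml.prop 0)))
    (Fml.box (Fml.prop 0))

/-- The logic `GL`: the smallest normal modal logic containing the Löb formula. -/
inductive GLProv : Fml → Prop where
  | taut {φ} : Taut φ → GLProv φ
  | axK : GLProv axK
  | axLob : GLProv axLob
  | mp {φ ψ} : GLProv (Fml.imp φ ψ) → GLProv φ → GLProv ψ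
  | usub {φ} (σ : ℕ → Fml) : GLProv φ → GLProv (fsubst σ φ)
  | nec {φ} : GLProv φ → GLProv (Fml.box φ)

section DerivedRules

open Fml

lemma gmp2 {A B C : Fml} (h : GLProv (A.imp (B.imp C)))
    (ha : GLProv A) (hb : GLProv B) : GLProv C :=
  GLProv.mp (GLProv.mp h ha) hb

lemma gmp3 {A B C D : Fml} (h : GLProv (A.imp (B.imp (C.imp D))))
    (ha : GLProv A) (hb : GLProv B) (hc : GLProv C) : GLProv D :=
  GLProv.mp (gmp2 h ha hb) hc

/-- `⊢ ⊤` -/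
lemma prov_top : GLProv .top := GLProv.taut (fun _ => rfl)

/-- from `⊢ A ⊃ B` and `⊢ B ⊃ C`, `⊢ A ⊃ C` -/
lemma gimp_trans {A B C : Fml} (h1 : GLProv (A.imp B)) (h2 : GLProv (B.imp C)) :
    GLProv (A.imp C) := by
  refine gmp2 (GLProv.taut ?_) h1 h2
  intro f; simp only [Fml.imp, beval]
  cases beval f A <;> cases beval f B <;> cases beval f C <;> simp

/-- `⊢ A ⊃ A` -/
lemma gimp_id (A : Fml) : GLProv (A.imp A) := by
  apply GLProv.taut; intro f; simp only [Fml.imp, beval]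
  cases beval f A <;> simp

/-- weakening: from `⊢ B`, `⊢ A ⊃ B` -/
lemma gimp_weak {B : Fml} (A : Fml) (h : GLProv B) : GLProv (A.imp B) := by
  refine GLProv.mp (GLProv.taut ?_) h
  intro f; simp only [Fml.imp, beval]
  cases beval f A <;> cases beval f B <;> simp

/-- `⊢ A∧B ⊃ A` -/
lemma gandE1 (A B : Fml) : GLProv ((A.and B).imp A) := by
  apply GLProv.taut; intro f; simp only [Fml.imp, beval]
  cases beval f A <;> cases beval f B <;> simp

/-- `⊢ A∧B ⊃ B` -/
lemma gandE2 (A B : Fml) : GLProv ((A.and B).imp B) := by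
  apply GLProv.taut; intro f; simp only [Fml.imp, beval]
  cases beval f A <;> cases beval f B <;> simp

/-- from `⊢ C ⊃ A`, `⊢ C ⊃ B`, infer `⊢ C ⊃ A∧B` -/
lemma gimp_and {A B C : Fml} (h1 : GLProv (C.imp A)) (h2 : GLProv (C.imp B)) :
    GLProv (C.imp (A.and B)) := by
  refine gmp2 (GLProv.taut ?_) h1 h2
  intro f; simp only [Fml.imp, beval]
  cases beval f A <;> cases beval f B <;> cases beval f C <;> simp

/-- from `⊢ C ⊃ A` and `⊢ A ⊃ (B ⊃ D)` and `⊢ C ⊃ B`, infer `⊢ C ⊃ D` (cut 2) -/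
lemma gimp_mp2 {A B C D : Fml} (h : GLProv (A.imp (B.imp D)))
    (h1 : GLProv (C.imp A)) (h2 : GLProv (C.imp B)) : GLProv (C.imp D) := by
  refine gmp3 (GLProv.taut ?_) h h1 h2
  intro f; simp only [Fml.imp, beval]
  cases beval f A <;> cases beval f B <;> cases beval f C <;> cases beval f D <;> simp

/-- from `⊢ C ⊃ A` and `⊢ A ⊃ D`, infer `⊢ C ⊃ D` -/
lemma gimp_cut {A C D : Fml} (h1 : GLProv (C.imp A)) (h : GLProv (A.imp D)) :
    GLProv (C.imp D) := gimp_trans h1 h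

/-- from `⊢ C ⊃ A` and `⊢ C ⊃ A.neg`, infer `⊢ C ⊃ ⊥` -/
lemma gimp_contra {A C : Fml} (h1 : GLProv (C.imp A)) (h2 : GLProv (C.imp A.neg)) :
    GLProv (C.imp .bot) := by
  refine gmp2 (GLProv.taut ?_) h1 h2
  intro f; simp only [Fml.imp, Fml.bot, beval]
  cases beval f A <;> cases beval f C <;> simp

/-- K as a schema -/
lemma prov_K (A B : Fml) :
    GLProv ((Fml.box (A.imp B)).imp ((Fml.box A).imp (Fml.box B))) := by
  have h := GLProv.usub (fun n => if n = 0 then A else B) GLProv.axK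
  simpa [axK, fsubst, Fml.imp] using h

/-- Löb as a schema -/
lemma prov_Lob (A : Fml) :
    GLProv ((Fml.box ((Fml.box A).imp A)).imp (Fml.box A)) := by
  have h := GLProv.usub (fun _ => A) GLProv.axLob
  simpa [axLob, fsubst, Fml.imp] using h

/-- box is monotone -/
lemma gbox_mono {A B : Fml} (h : GLProv (A.imp B)) :
    GLProv ((Fml.box A).imp (Fml.box B)) :=
  GLProv.mp (prov_K A B) (GLProv.nec h)

/-- `⊢ □A ∧ □B ⊃ □(A∧B)` -/
lemma gbox_and (A B : Fml) :
    GLProv (((Fml.box A).and (Fml.box B)).imp (Fml.box (A.and B))) := by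
  have h1 : GLProv (A.imp (B.imp (A.and B))) := by
    apply GLProv.taut; intro f; simp only [Fml.imp, beval]
    cases beval f A <;> cases beval f B <;> simp
  have h2 := gbox_mono h1
  have h3 := prov_K B (A.and B)
  -- □A ⊃ □(B ⊃ A∧B) ⊃ (□B ⊃ □(A∧B))
  exact gimp_mp2 (gimp_trans h2 h3) (gandE1 _ _) (gandE2 _ _)

/-- axiom 4 is derivable in GL -/
lemma prov_four (A : Fml) : GLProv ((Fml.box A).imp (Fml.box (Fml.box A))) := by
  set q : Fml := A.and (Fml.box A) with hq
  have hqA : GLProv (q.imp A) := gandE1 _ _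
  have hbq_bA : GLProv ((Fml.box q).imp (Fml.box A)) := gbox_mono hqA
  -- ⊢ A ⊃ (□q ⊃ q)
  have h1 : GLProv (A.imp ((Fml.box q).imp q)) := by
    -- from ⊢ □q ⊃ □A : propositional
    refine GLProv.mp (GLProv.taut ?_) hbq_bA
    intro f; simp only [Fml.imp, beval, hq]
    cases beval f A <;> cases f (Fml.box q) <;> cases f (Fml.box A) <;> simp
  have h2 : GLProv ((Fml.box A).imp (Fml.box ((Fml.box q).imp q))) := gbox_mono h1
  have h3 : GLProv ((Fml.box A).imp (Fml.box q)) := gimp_trans h2 (prov_Lob q)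
  have hq_bA : GLProv (q.imp (Fml.box A)) := gandE2 _ _
  exact gimp_trans h3 (gbox_mono hq_bA)

end DerivedRules
section Soundness

open Classical

variable {W : Type} (R : W → W → Prop) (v : ℕ → Set W)

lemma beval_truth (w : W) (ψ : Fml) :
    beval (fun χ => decide (Truth R v χ w)) ψ = decide (Truth R v ψ w) := by
  induction ψ with
  | prop n => rfl
  | top => exact (decide_eq_true (p := Truth R v .top w) trivial).symm
  | and a b iha ihb =>
    show (beval _ a && beval _ b) = _
    rw [iha, ihb]
    refine Bool.eq_iff_iff.mpr ⟨fun h => ?_, fun h => ?_⟩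
    · rw [Bool.and_eq_true] at h
      exact decide_eq_true (p := Truth R v (.and a b) w) ⟨of_decide_eq_true h.1, of_decide_eq_true h.2⟩
    · have h' : Truth R v a w ∧ Truth R v b w := of_decide_eq_true (p := Truth R v (.and a b) w) h
      rw [Bool.and_eq_true]; exact ⟨decide_eq_true h'.1, decide_eq_true h'.2⟩
  | neg a iha =>
    show (!beval _ a) = _
    rw [iha]
    by_cases h : Truth R v a w
    · rw [decide_eq_true h, decide_eq_false (p := Truth R v (.neg a) w) (fun hn => hn h)]; rfl
    · rw [decide_eq_false h, decide_eq_true (p := Truth R v (.neg a) w) h]; rfl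
  | box a => rfl

lemma truth_imp {w : W} {A B : Fml} :
    Truth R v (A.imp B) w ↔ (Truth R v A w → Truth R v B w) := by
  simp only [Fml.imp, Truth]; tauto

lemma valid_taut {φ : Fml} (h : Taut φ) : Valid R φ := by
  intro v w
  have := h (fun χ => decide (Truth R v χ w))
  rw [beval_truth] at this
  exact of_decide_eq_true this

lemma truth_fsubst (σ : ℕ → Fml) (ψ : Fml) (w : W) :
    Truth R v (fsubst σ ψ) w ↔ Truth R (fun n => {x | Truth R v (σ n) x}) ψ w := by
  induction ψ generalizing w with
  | prop n => simp only [fsubst, Truth]; rfl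
  | top => simp [fsubst, Truth]
  | and a b iha ihb => simp [fsubst, Truth, iha, ihb]
  | neg a iha => simp [fsubst, Truth, iha]
  | box a iha =>
      simp only [fsubst, Truth]
      exact forall_congr' fun w' => imp_congr Iff.rfl (iha w')

/-- accessibility from bounded chains -/
lemma acc_of_bounded (N : ℕ) :
    ∀ w : W, (∀ (n : ℕ) (c : ℕ → W), c 0 = w → (∀ i < n, R (c i) (c (i+1))) → n ≤ N) →
      Acc (fun x y => R y x) w := by
  induction N with
  | zero =>
    intro w hw
    constructor
    intro u hu
    exfalso
    have := hw 1 (fun i => if i = 0 then w else u) rfl (by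
      intro i hi
      interval_cases i
      simpa using hu)
    omega
  | succ N ih =>
    intro w hw
    constructor
    intro u hu
    apply ih
    intro n c hc0 hchain
    have := hw (n+1) (fun i => if i = 0 then w else c (i-1)) rfl (by
      intro i hi
      rcases Nat.eq_zero_or_pos i with h0 | h0
      · subst h0; simpa [hc0] using hu
      · have h1 : i - 1 + 1 = i := by omega
        have h2 : i ≠ 0 := by omega
        simpa [h2, h1] using hchain (i-1) (by omega))
    omega

lemma valid_lob (hT : Transitive R) (hL : LocallyFiniteHeight R) : Valid R axLob := by
  intro v w
  simp only [axLob, Fml.imp, Truth, not_and, not_not]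
  intro hbox u hu
  obtain ⟨N, hN⟩ := hL u
  have hacc : Acc (fun x y => R y x) u := acc_of_bounded R N u hN
  clear hN
  induction hacc with
  | intro u _ ih =>
    exact hbox u hu (fun u' hu' => ih u' hu' (hT hu hu'))

lemma soundness {φ : Fml} (h : GLProv φ) (hT : Transitive R) (hL : LocallyFiniteHeight R) :
    Valid R φ := by
  induction h with
  | taut ht => exact valid_taut R ht
  | axK =>
    intro v w
    simp only [axK, Fml.imp, Truth, not_and, not_not]
    intro h1 h2 u hu
    exact h1 u hu (h2 u hu)
  | axLob => exact valid_lob R hT hL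
  | mp h1 h2 ih1 ih2 =>
    intro v w
    have := ih1 v w
    rw [truth_imp] at this
    exact this (ih2 v w)
  | usub σ h ih =>
    intro v w
    rw [truth_fsubst]
    exact ih _ w
  | nec h ih =>
    intro v w
    intro u _
    exact ih v u

end Soundness
deriving instance DecidableEq for Fml

section Conj

open Fml

/-- Conjunction of a list of formulas. -/
def conj : List Fml → Fml
  | [] => .top
  | ψ :: l => .and ψ (conj l)

lemma conj_imp_mem {Γ : List Fml} {ψ : Fml} (h : ψ ∈ Γ) : GLProv ((conj Γ).imp ψ) := by
  induction Γ with
  | nil => cases h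
  | cons a l ih =>
    rcases List.mem_cons.mp h with rfl | h
    · exact gandE1 _ _
    · exact gimp_trans (gandE2 _ _) (ih h)

lemma imp_conj {Γ : List Fml} {θ : Fml} (h : ∀ ψ ∈ Γ, GLProv (θ.imp ψ)) :
    GLProv (θ.imp (conj Γ)) := by
  induction Γ with
  | nil => exact gimp_weak _ prov_top
  | cons a l ih =>
    exact gimp_and (h a List.mem_cons_self) (ih fun ψ hψ => h ψ (List.mem_cons_of_mem _ hψ))

lemma box_conj_list (Γ : List Fml) :
    GLProv ((conj (Γ.map Fml.box)).imp (Fml.box (conj Γ))) := by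
  induction Γ with
  | nil => exact gimp_weak _ (GLProv.nec prov_top)
  | cons a l ih =>
    show GLProv ((Fml.and (Fml.box a) (conj (l.map Fml.box))).imp (Fml.box (conj (a :: l))))
    have h1 : GLProv ((Fml.and (Fml.box a) (conj (l.map Fml.box))).imp
        (Fml.and (Fml.box a) (Fml.box (conj l)))) :=
      gimp_and (gandE1 _ _) (gimp_trans (gandE2 _ _) ih)
    exact gimp_trans h1 (gbox_and a (conj l))

/-- A formula is consistent if its negation is not provable. -/
def GCon (χ : Fml) : Prop := ¬ GLProv (χ.imp .bot)

lemma gcon_mono {χ χ' : Fml} (h : GLProv (χ.imp χ')) (hc : GCon χ) : GCon χ' :=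
  fun hb => hc (gimp_trans h hb)

/-- `theta M t`: the conjunction describing the assignment `t` on list `M`. -/
def theta (M : List Fml) (t : Fml → Bool) : Fml :=
  conj (M.map fun ψ => if t ψ then ψ else ψ.neg)

lemma theta_imp_of_mem_true {M : List Fml} {t : Fml → Bool} {ψ : Fml}
    (hm : ψ ∈ M) (ht : t ψ = true) : GLProv ((theta M t).imp ψ) := by
  have : ψ ∈ M.map fun χ => if t χ then χ else χ.neg := by
    refine List.mem_map.mpr ⟨ψ, hm, by simp [ht]⟩
  exact conj_imp_mem this

lemma theta_imp_of_mem_false {M : List Fml} {t : Fml → Bool} {ψ : Fml}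
    (hm : ψ ∈ M) (ht : t ψ = false) : GLProv ((theta M t).imp ψ.neg) := by
  have : ψ.neg ∈ M.map fun χ => if t χ then χ else χ.neg := by
    refine List.mem_map.mpr ⟨ψ, hm, by simp [ht]⟩
  exact conj_imp_mem this

lemma theta_congr {M : List Fml} {t t' : Fml → Bool}
    (h : ∀ ψ ∈ M, t ψ = t' ψ) : theta M t = theta M t' := by
  unfold theta
  congr 1
  exact List.map_congr_left fun ψ hψ => by rw [h ψ hψ]

/-- Finite Lindenbaum lemma. -/
lemma lindenbaum {M : List Fml} (hnd : M.Nodup) {α : Fml} (hα : GCon α) :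
    ∃ t : Fml → Bool, GCon (α.and (theta M t)) := by
  induction M generalizing α with
  | nil =>
    refine ⟨fun _ => true, ?_⟩
    refine gcon_mono ?_ hα
    exact gimp_and (gimp_id α) (gimp_weak _ prov_top)
  | cons ψ M ih =>
    have hnd' : M.Nodup := (List.nodup_cons.mp hnd).2
    have hψM : ψ ∉ M := (List.nodup_cons.mp hnd).1
    have key : GCon (α.and ψ) ∨ GCon (α.and ψ.neg) := by
      by_contra hcon
      push_neg at hcon
      obtain ⟨h1, h2⟩ := hcon
      rw [GCon, not_not] at h1 h2
      apply hα
      refine gmp2 (GLProv.taut ?_) h1 h2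
      intro f; simp only [Fml.imp, Fml.bot, beval]
      cases beval f α <;> cases beval f ψ <;> simp
    have main : ∀ b : Bool, GCon (α.and (if b then ψ else ψ.neg)) →
        ∃ t : Fml → Bool, GCon (α.and (theta (ψ :: M) t)) := by
      intro b hb
      obtain ⟨t, ht⟩ := ih hnd' hb
      refine ⟨fun χ => if χ = ψ then b else t χ, ?_⟩
      have hth : theta M (fun χ => if χ = ψ then b else t χ) = theta M t :=
        theta_congr fun χ hχ => by
          have : χ ≠ ψ := fun h => hψM (h ▸ hχ)
          simp [this]
      refine gcon_mono ?_ ht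
      show GLProv (((α.and (if b then ψ else ψ.neg)).and (theta M t)).imp
        (α.and (theta (ψ :: M) (fun χ => if χ = ψ then b else t χ))))
      have hcons : theta (ψ :: M) (fun χ => if χ = ψ then b else t χ) =
          Fml.and (if b then ψ else ψ.neg) (theta M t) := by
        unfold theta
        simp only [List.map_cons]
        show Fml.and _ _ = Fml.and _ _
        have e2 : (M.map fun χ => if (if χ = ψ then b else t χ) = true then χ else χ.neg) =
            (M.map fun χ => if t χ = true then χ else χ.neg) :=
          List.map_congr_left fun χ hχ => by
            have : χ ≠ ψ := fun h => hψM (h ▸ hχ)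
            simp [this]
        exact congrArg₂ Fml.and (by simp) (congrArg conj e2)
      rw [hcons]
      refine gimp_and (gimp_trans (gandE1 _ _) (gandE1 _ _)) ?_
      exact gimp_and (gimp_trans (gandE1 _ _) (gandE2 _ _)) (gandE2 _ _)
    rcases key with h | h
    · exact main true (by simpa using h)
    · exact main false (by simpa using h)

end Conj
section Canonical

open Fml

lemma countP_lt {α : Type*} {p q : α → Bool} {l : List α}
    (hpq : ∀ x ∈ l, p x = true → q x = true)
    (hex : ∃ x ∈ l, q x = true ∧ p x = false) : l.countP p < l.countP q := by
  obtain ⟨x, hx, hqx, hpx⟩ := hex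
  obtain ⟨l1, l2, rfl⟩ := List.append_of_mem hx
  have h1 : l1.countP p ≤ l1.countP q :=
    List.countP_mono_left (fun y hy => hpq y (by simp [hy]))
  have h2 : l2.countP p ≤ l2.countP q :=
    List.countP_mono_left (fun y hy => hpq y (by simp [hy]))
  simp only [List.countP_append, List.countP_cons, hqx, hpx]
  simp
  omega

def isBoxB : Fml → Bool
  | .box _ => true
  | _ => false

def unbox : Fml → Fml
  | .box χ => χ
  | χ => χ

variable (L : List Fml)

/-- Worlds of the canonical model: consistent boolean assignments on `L`. -/
def Wld := {t : Fml → Bool // GCon (theta L t)}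

/-- The canonical accessibility relation. -/
def GRel (s u : Wld L) : Prop :=
  (∀ χ, Fml.box χ ∈ L → s.1 (Fml.box χ) = true → u.1 (Fml.box χ) = true ∧ u.1 χ = true) ∧
  (∃ χ, Fml.box χ ∈ L ∧ u.1 (Fml.box χ) = true ∧ s.1 (Fml.box χ) = false)

lemma rel_trans : Transitive (GRel L) := by
  rintro s u x ⟨h1, _⟩ ⟨h3, χ, hχL, hxχ, huχ⟩
  constructor
  · intro χ' hχ'L hs
    exact h3 χ' hχ'L (h1 χ' hχ'L hs).1
  · refine ⟨χ, hχL, hxχ, ?_⟩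
    by_contra hb
    have : s.1 (Fml.box χ) = true := by simpa using hb
    exact absurd (h1 χ hχL this).1 (by simp [huχ])

def nboxes (t : Fml → Bool) : ℕ := L.countP (fun ψ => isBoxB ψ && t ψ)

lemma rel_nboxes_lt {s u : Wld L} (h : GRel L s u) : nboxes L s.1 < nboxes L u.1 := by
  apply countP_lt
  · intro x hx hpx
    cases x with
    | box χ =>
      simp only [isBoxB, Bool.true_and] at hpx ⊢
      exact (h.1 χ hx hpx).1
    | prop n => simp [isBoxB] at hpx
    | top => simp [isBoxB] at hpx
    | and a b => simp [isBoxB] at hpx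
    | neg a => simp [isBoxB] at hpx
  · obtain ⟨χ, hχL, hu, hs⟩ := h.2
    exact ⟨Fml.box χ, hχL, by simp [isBoxB, hu], by simp [isBoxB, hs]⟩

lemma rel_lfh : LocallyFiniteHeight (GRel L) := by
  intro s
  refine ⟨L.length, ?_⟩
  intro n c h0 hchain
  have key : ∀ i, i ≤ n → nboxes L (c 0).1 + i ≤ nboxes L (c i).1 := by
    intro i
    induction i with
    | zero => simp
    | succ i ih =>
      intro hin
      have ha := rel_nboxes_lt L (hchain i (by omega))
      have hb := ih (by omega)
      omega
  have h1 := key n le_rfl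
  have h2 : nboxes L (c n).1 ≤ L.length := by
    have := List.countP_eq_length_filter (p := fun ψ => isBoxB ψ && (c n).1 ψ) (l := L)
    have := List.length_filter_le (fun ψ => isBoxB ψ && (c n).1 ψ) L
    unfold nboxes
    omega
  omega

lemma mem_true_of_imp {α : Fml} {t : Fml → Bool} (hc : GCon (α.and (theta L t))) {ψ : Fml}
    (hψ : ψ ∈ L) (h : GLProv (α.imp ψ)) : t ψ = true := by
  by_contra hf
  have hf' : t ψ = false := by simpa using hf
  have h1 : GLProv ((α.and (theta L t)).imp ψ) := gimp_trans (gandE1 _ _) h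
  have h2 : GLProv ((α.and (theta L t)).imp ψ.neg) :=
    gimp_trans (gandE2 _ _) (theta_imp_of_mem_false hψ hf')
  exact hc (gimp_contra h1 h2)

lemma mem_false_of_imp {α : Fml} {t : Fml → Bool} (hc : GCon (α.and (theta L t))) {ψ : Fml}
    (hψ : ψ ∈ L) (h : GLProv (α.imp ψ.neg)) : t ψ = false := by
  by_contra hf
  have hf' : t ψ = true := by simpa using hf
  have h1 : GLProv ((α.and (theta L t)).imp ψ) :=
    gimp_trans (gandE2 _ _) (theta_imp_of_mem_true hψ hf')
  have h2 : GLProv ((α.and (theta L t)).imp ψ.neg) := gimp_trans (gandE1 _ _) h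
  exact hc (gimp_contra h1 h2)

lemma self_true {s : Wld L} {ψ : Fml} (hψ : ψ ∈ L)
    (h : GLProv ((theta L s.1).imp ψ)) : s.1 ψ = true := by
  by_contra hf
  exact s.2 (gimp_contra h (theta_imp_of_mem_false hψ (by simpa using hf)))

lemma self_not_both {s : Wld L} {ψ : Fml} (h1 : GLProv ((theta L s.1).imp ψ))
    (h2 : GLProv ((theta L s.1).imp ψ.neg)) : False := s.2 (gimp_contra h1 h2)

/-- canonical valuation -/
def val : ℕ → Set (Wld L) := fun n => {s | s.1 (.prop n) = true}

/-- consistency of the "existence lemma" formula -/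
lemma alpha_con {s : Wld L} {a : Fml} (haL : Fml.box a ∈ L)
    (hf' : s.1 (Fml.box a) = false) :
    GCon ((Fml.box a).and ((Fml.neg a).and
      (conj ((L.filter fun χ => isBoxB χ && s.1 χ).map fun β => β.and (unbox β))))) := by
  intro hbot
  set cj : List Fml := (L.filter fun χ => isBoxB χ && s.1 χ).map fun β => β.and (unbox β)
    with hcj
  have h1 : GLProv ((conj cj).imp ((Fml.box a).imp a)) := by
    refine GLProv.mp (GLProv.taut ?_) hbot
    intro f
    simp only [Fml.imp, Fml.bot, beval]
    cases f (Fml.box a) <;> cases beval f a <;> cases beval f (conj cj) <;> simp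
  have h2 : GLProv ((Fml.box (conj cj)).imp (Fml.box a)) :=
    gimp_trans (gbox_mono h1) (prov_Lob a)
  have h3 : GLProv ((theta L s.1).imp (conj (cj.map Fml.box))) := by
    apply imp_conj
    intro ψ hψ
    obtain ⟨γ, hγ, rfl⟩ := List.mem_map.mp hψ
    obtain ⟨β, hβBs, rfl⟩ := List.mem_map.mp hγ
    obtain ⟨hβL, hpred⟩ := List.mem_filter.mp hβBs
    cases β with
    | box χ =>
      have hsχ : s.1 (Fml.box χ) = true := by simpa [isBoxB] using hpred
      have hθχ : GLProv ((theta L s.1).imp (Fml.box χ)) := theta_imp_of_mem_true hβL hsχ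
      have h4 : GLProv ((theta L s.1).imp (Fml.box (Fml.box χ))) :=
        gimp_trans hθχ (prov_four χ)
      exact gimp_trans (gimp_and h4 hθχ) (gbox_and (Fml.box χ) χ)
    | prop n => simp [isBoxB] at hpred
    | top => simp [isBoxB] at hpred
    | and x y => simp [isBoxB] at hpred
    | neg x => simp [isBoxB] at hpred
  have h5 : GLProv ((theta L s.1).imp (Fml.box a)) :=
    gimp_trans (gimp_trans h3 (box_conj_list cj)) h2
  exact self_not_both _ h5 (theta_imp_of_mem_false haL hf')

lemma truth_lemma (hnd : L.Nodup)
    (hand : ∀ a b, Fml.and a b ∈ L → a ∈ L ∧ b ∈ L)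
    (hneg : ∀ a, Fml.neg a ∈ L → a ∈ L)
    (hbox : ∀ a, Fml.box a ∈ L → a ∈ L) :
    ∀ ψ, ψ ∈ L → ∀ s : Wld L, Truth (GRel L) (val L) ψ s ↔ s.1 ψ = true := by
  intro ψ
  induction ψ with
  | prop n => intro _ s; exact Iff.rfl
  | top =>
    intro h s
    have : s.1 .top = true := self_true L h (gimp_weak _ prov_top)
    simp [Truth, this]
  | and a b iha ihb =>
    intro h s
    obtain ⟨haL, hbL⟩ := hand a b h
    simp only [Truth, iha haL s, ihb hbL s]
    constructor
    · rintro ⟨h1, h2⟩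
      exact self_true L h
        (gimp_and (theta_imp_of_mem_true haL h1) (theta_imp_of_mem_true hbL h2))
    · intro h12
      have hθ : GLProv ((theta L s.1).imp (a.and b)) := theta_imp_of_mem_true h h12
      constructor
      · exact self_true L haL (gimp_trans hθ (gandE1 _ _))
      · exact self_true L hbL (gimp_trans hθ (gandE2 _ _))
  | neg a iha =>
    intro h s
    have haL := hneg a h
    simp only [Truth, iha haL s]
    constructor
    · intro hna
      have hfa : s.1 a = false := by simpa using hna
      exact self_true L h (theta_imp_of_mem_false haL hfa)
    · intro h1 h2
      exact self_not_both L (theta_imp_of_mem_true haL h2)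
        (theta_imp_of_mem_true h h1)
  | box a iha =>
    intro h s
    have haL := hbox a h
    constructor
    · intro htr
      simp only [Truth] at htr
      by_contra hf
      have hf' : s.1 (Fml.box a) = false := by simpa using hf
      have hconα := alpha_con L h hf'
      obtain ⟨t', ht'⟩ := lindenbaum hnd hconα
      set cj : List Fml := (L.filter fun χ => isBoxB χ && s.1 χ).map fun β => β.and (unbox β)
        with hcj
      set α : Fml := (Fml.box a).and ((Fml.neg a).and (conj cj)) with hα
      let u : Wld L := ⟨t', gcon_mono (gandE2 _ _) ht'⟩
      have hrel : GRel L s u := by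
        constructor
        · intro χ hχL hsχ
          have hβ : Fml.box χ ∈ L.filter fun χ' => isBoxB χ' && s.1 χ' :=
            List.mem_filter.mpr ⟨hχL, by simp [isBoxB, hsχ]⟩
          have hγ : (Fml.box χ).and χ ∈ cj := List.mem_map.mpr ⟨_, hβ, rfl⟩
          have himp : GLProv (α.imp ((Fml.box χ).and χ)) :=
            gimp_trans (gandE2 _ _) (gimp_trans (gandE2 _ _) (conj_imp_mem hγ))
          exact ⟨mem_true_of_imp L ht' hχL (gimp_trans himp (gandE1 _ _)),
            mem_true_of_imp L ht' (hbox χ hχL) (gimp_trans himp (gandE2 _ _))⟩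
        · exact ⟨a, h, mem_true_of_imp L ht' h (gandE1 _ _), hf'⟩
      have hta : t' a = false :=
        mem_false_of_imp L ht' haL (gimp_trans (gandE2 _ _) (gandE1 _ _))
      have hua : t' a = true := (iha haL u).mp (htr u hrel)
      rw [hua] at hta
      exact Bool.noConfusion hta
    · intro hs
      simp only [Truth]
      intro u hu
      exact (iha haL u).mpr (hu.1 a h hs).2

end Canonical

section Subformulas

open Fml

def subf : Fml → List Fml
  | .prop n => [.prop n]
  | .top => [.top]
  | .and a b => .and a b :: (subf a ++ subf b)
  | .neg a => .neg a :: subf a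
  | .box a => .box a :: subf a

lemma mem_subf_self (φ : Fml) : φ ∈ subf φ := by
  cases φ <;> simp [subf]

lemma subf_subf : ∀ {φ ψ : Fml}, ψ ∈ subf φ → subf ψ ⊆ subf φ := by
  intro φ
  induction φ with
  | prop n =>
    intro ψ h
    simp [subf] at h
    subst h; exact fun x hx => hx
  | top =>
    intro ψ h
    simp [subf] at h
    subst h; exact fun x hx => hx
  | and a b iha ihb =>
    intro ψ h
    simp only [subf, List.mem_cons, List.mem_append] at h
    rcases h with rfl | h | h
    · exact fun x hx => hx
    · exact List.Subset.trans (iha  h) (fun x hx => by simp [subf, hx])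
    · exact List.Subset.trans (ihb  h) (fun x hx => by simp [subf, hx])
  | neg a iha =>
    intro ψ h
    simp only [subf, List.mem_cons] at h
    rcases h with rfl | h
    · exact fun x hx => hx
    · exact List.Subset.trans (iha  h) (fun x hx => by simp [subf, hx])
  | box a iha =>
    intro ψ h
    simp only [subf, List.mem_cons] at h
    rcases h with rfl | h
    · exact fun x hx => hx
    · exact List.Subset.trans (iha  h) (fun x hx => by simp [subf, hx])

end Subformulas
theorem stmt18 (φ : Fml) :
    GLProv φ ↔ ∀ (W : Type) [Nonempty W] (R : W → W → Prop),
      Transitive R → LocallyFiniteHeight R → Valid R φ := by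
  constructor
  · intro h W _ R hT hL
    exact soundness R h hT hL
  · intro H
    by_contra hφ
    classical
    set L : List Fml := (subf φ).dedup with hLdef
    have hnd : L.Nodup := List.nodup_dedup _
    have hmem : ∀ ψ : Fml, ψ ∈ L ↔ ψ ∈ subf φ := fun ψ => List.mem_dedup
    have hand : ∀ a b, Fml.and a b ∈ L → a ∈ L ∧ b ∈ L := by
      intro a b h
      have h' := (hmem _).mp h
      constructor
      · exact (hmem a).mpr (subf_subf h' (by simp [subf, mem_subf_self]))
      · exact (hmem b).mpr (subf_subf h' (by simp [subf, mem_subf_self]))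
    have hneg : ∀ a, Fml.neg a ∈ L → a ∈ L := by
      intro a h
      exact (hmem a).mpr (subf_subf ((hmem _).mp h) (by simp [subf, mem_subf_self]))
    have hbox : ∀ a, Fml.box a ∈ L → a ∈ L := by
      intro a h
      exact (hmem a).mpr (subf_subf ((hmem _).mp h) (by simp [subf, mem_subf_self]))
    have hφL : φ ∈ L := (hmem φ).mpr (mem_subf_self φ)
    have hcon : GCon φ.neg := by
      intro hb
      apply hφ
      refine GLProv.mp (GLProv.taut ?_) hb
      intro f
      simp only [Fml.imp, Fml.bot, beval]
      cases beval f φ <;> simp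
    obtain ⟨t, ht⟩ := lindenbaum hnd hcon
    let s : Wld L := ⟨t, gcon_mono (gandE2 _ _) ht⟩
    have hfalse : t φ = false := mem_false_of_imp L ht hφL (gimp_id φ.neg)
    haveI hne : Nonempty (Wld L) := ⟨s⟩
    have hval := H (Wld L) (GRel L) (rel_trans L) (rel_lfh L)
    have htruth := hval (val L) s
    have := (truth_lemma L hnd hand hneg hbox φ hφL s).mp htruth
    have : t φ = true := this
    rw [this] at hfalse
    exact Bool.noConfusion hfalse
end
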